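/- If Z is a Gaussian random variable with mean m and standard deviation σ > 0, and z* is a real number, then E[(z* - Z)^+] = (z* - m)Φ((z* - m)/σ) + σφ((z* - m)/σ), where Φ and φ are the standard normal CDF and PDF and (a)^+ = max(a, 0). -/

import Mathlib

open MeasureTheory ProbabilityTheory

/-- The standard normal density. -/
noncomputable def stdNormalPDF (s : ℝ) : ℝ :=
  (Real.sqrt (2 * Real.pi))⁻¹ * Real.exp (-s ^ 2 / 2)

/-- The standard normal cumulative distribution function. -/
noncomputable def stdNormalCDF (t : ℝ) : ℝ :=
  ∫ s in Set.Iic t, stdNormalPDF s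

open Real Set Filter
open scoped ENNReal NNReal

lemma hasDerivAt_stdNormalPDF (s : ℝ) :
    HasDerivAt stdNormalPDF (-s * stdNormalPDF s) s := by
  have h1 : HasDerivAt (fun s : ℝ => -s ^ 2 / 2) (-s) s := by
    have h := ((hasDerivAt_pow 2 s).neg).div_const 2
    exact h.congr_deriv (by simp; ring)
  have h2 := (h1.exp).const_mul (Real.sqrt (2 * Real.pi))⁻¹
  unfold stdNormalPDF
  exact h2.congr_deriv (by ring)

lemma integrable_stdNormalPDF : Integrable stdNormalPDF := by
  have := (integrable_exp_neg_mul_sq (by norm_num : (0:ℝ) < 1/2)).const_mul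
    (Real.sqrt (2 * Real.pi))⁻¹
  exact this.congr (ae_of_all _ fun s => by rw [stdNormalPDF]; ring_nf)

lemma integrable_mul_stdNormalPDF : Integrable (fun s => s * stdNormalPDF s) := by
  have := (integrable_mul_exp_neg_mul_sq (by norm_num : (0:ℝ) < 1/2)).const_mul
    (Real.sqrt (2 * Real.pi))⁻¹
  exact this.congr (ae_of_all _ fun s => by simp only [stdNormalPDF]; ring_nf)

lemma integrable_neg_mul_stdNormalPDF : Integrable (fun s => -s * stdNormalPDF s) :=
  integrable_mul_stdNormalPDF.neg.congr (ae_of_all _ fun s => by simp only [Pi.neg_apply]; ring)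

lemma tendsto_stdNormalPDF_atBot : Tendsto stdNormalPDF atBot (nhds 0) := by
  have h1 : Tendsto (fun s : ℝ => s ^ 2) atBot atTop :=
    ((tendsto_pow_atTop (n := 2) (α := ℝ) (by norm_num)).comp tendsto_neg_atBot_atTop).congr
      (fun s => by simp [Function.comp])
  have h2 : Tendsto (fun s : ℝ => -s ^ 2 / 2) atBot atBot :=
    Tendsto.atBot_div_const two_pos
      ((tendsto_neg_atTop_atBot.comp h1).congr (fun s => rfl))
  have h3 := (Real.tendsto_exp_atBot.comp h2).const_mul (Real.sqrt (2 * Real.pi))⁻¹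
  unfold stdNormalPDF; simpa only [stdNormalPDF, Function.comp_def, mul_zero] using h3

lemma integral_Iic_neg_mul_stdNormalPDF (c : ℝ) :
    ∫ s in Iic c, -s * stdNormalPDF s = stdNormalPDF c := by
  have := integral_Iic_of_hasDerivAt_of_tendsto
    (f := stdNormalPDF) (f' := fun s => -s * stdNormalPDF s) (a := c)
    (hasDerivAt_stdNormalPDF c).continuousAt.continuousWithinAt
    (fun x _ => hasDerivAt_stdNormalPDF x)
    integrable_neg_mul_stdNormalPDF.integrableOn
    tendsto_stdNormalPDF_atBot
  simpa using this

lemma key (c : ℝ) :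
    ∫ s, max (c - s) 0 * stdNormalPDF s = c * stdNormalCDF c + stdNormalPDF c := by
  have heq : (fun s => max (c - s) 0 * stdNormalPDF s)
      = Set.indicator (Iic c) (fun s => (c - s) * stdNormalPDF s) := by
    ext s
    by_cases hs : s ≤ c
    · simp [Set.indicator_of_mem, hs, max_eq_left (by linarith : (0:ℝ) ≤ c - s)]
    · simp [Set.indicator_of_notMem, hs, max_eq_right (by linarith : c - s ≤ (0:ℝ))]
  rw [heq, integral_indicator measurableSet_Iic]
  have h1 : ∫ s in Iic c, (c - s) * stdNormalPDF s
      = (∫ s in Iic c, c * stdNormalPDF s) + ∫ s in Iic c, -s * stdNormalPDF s := by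
    rw [← integral_add (integrable_stdNormalPDF.const_mul c).integrableOn
      integrable_neg_mul_stdNormalPDF.integrableOn]
    congr 1; ext s; ring
  rw [h1, integral_Iic_neg_mul_stdNormalPDF, integral_const_mul, stdNormalCDF]

lemma integral_gaussianReal_std (g : ℝ → ℝ) :
    ∫ t, g t ∂(gaussianReal 0 1) = ∫ t, g t * stdNormalPDF t := by
  rw [gaussianReal_of_var_ne_zero _ one_ne_zero]
  have hpdf : gaussianPDF 0 1
      = fun x => (((fun x => (gaussianPDFReal 0 1 x).toNNReal) x : ℝ≥0) : ℝ≥0∞) := rfl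
  rw [hpdf, integral_withDensity_eq_integral_smul
    ((measurable_gaussianPDFReal 0 1).real_toNNReal) g]
  congr 1; ext t
  rw [NNReal.smul_def, smul_eq_mul, Real.coe_toNNReal _ (gaussianPDFReal_nonneg 0 1 t), mul_comm]
  congr 1
  simp [gaussianPDFReal, stdNormalPDF]

/-- Closed-form expected improvement: if `Z ~ N(m, σ²)` with `σ > 0` and `z* ∈ ℝ`, then
`E[(z* - Z)⁺] = (z* - m) Φ((z* - m)/σ) + σ φ((z* - m)/σ)`. -/
theorem expected_improvement_closed_form
    {Ω : Type*} [MeasurableSpace Ω] (μ : Measure Ω) [IsProbabilityMeasure μ]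
    (Z : Ω → ℝ) (m σ : ℝ) (hσ : 0 < σ)
    (hZ : μ.map Z = gaussianReal m (Real.toNNReal (σ ^ 2)))
    (zstar : ℝ) :
    ∫ ω, max (zstar - Z ω) 0 ∂μ =
      (zstar - m) * stdNormalCDF ((zstar - m) / σ) +
        σ * stdNormalPDF ((zstar - m) / σ) := by
  have hσ' : σ ≠ 0 := ne_of_gt hσ
  set c : ℝ := (zstar - m) / σ with hc
  have hZm : AEMeasurable Z μ :=
    aemeasurable_of_map_neZero (by rw [hZ]; infer_instance)
  set W : Ω → ℝ := fun ω => σ⁻¹ * (Z ω - m) with hW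
  have hWm : AEMeasurable W μ := ((hZm.sub aemeasurable_const).const_mul σ⁻¹)
  have h1 : μ.map (fun ω => Z ω - m) = gaussianReal 0 (Real.toNNReal (σ ^ 2)) := by
    have h := AEMeasurable.map_map_of_aemeasurable
      (measurable_id'.add_const (-m)).aemeasurable hZm
    rw [hZ, gaussianReal_map_add_const (-m)] at h
    simpa [Function.comp_def, sub_eq_add_neg] using h.symm
  have h2 : μ.map W = gaussianReal 0 (NNReal.mk ((σ⁻¹)^2) (sq_nonneg _) * Real.toNNReal (σ ^ 2)) := by
    have h := AEMeasurable.map_map_of_aemeasurable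
      (g := fun x : ℝ => σ⁻¹ * x) (f := fun ω => Z ω - m) (μ := μ)
      (measurable_id'.const_mul σ⁻¹).aemeasurable (hZm.sub aemeasurable_const)
    rw [h1, gaussianReal_map_const_mul σ⁻¹] at h
    simpa [Function.comp_def] using h.symm
  have hv1 : (NNReal.mk ((σ⁻¹)^2) (sq_nonneg _) * Real.toNNReal (σ ^ 2) : ℝ≥0) = 1 := by
    ext
    push_cast
    rw [Real.coe_toNNReal _ (sq_nonneg σ)]
    field_simp
  rw [hv1] at h2
  have hmax : ∀ ω, max (zstar - Z ω) 0 = σ * max (c - W ω) 0 := by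
    intro ω
    rw [mul_max_of_nonneg _ _ hσ.le, mul_zero]
    congr 1
    rw [hc, hW]
    field_simp
    ring
  have hgm : AEStronglyMeasurable (fun t : ℝ => max (c - t) 0) (μ.map W) :=
    (Continuous.max (continuous_const.sub continuous_id) continuous_const).aestronglyMeasurable
  calc ∫ ω, max (zstar - Z ω) 0 ∂μ
      = ∫ ω, σ * max (c - W ω) 0 ∂μ := by simp_rw [hmax]
    _ = σ * ∫ ω, max (c - W ω) 0 ∂μ := integral_const_mul _ _
    _ = σ * ∫ t, max (c - t) 0 ∂(μ.map W) := by rw [integral_map hWm hgm]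
    _ = σ * ∫ t, max (c - t) 0 * stdNormalPDF t := by rw [h2, integral_gaussianReal_std]
    _ = σ * (c * stdNormalCDF c + stdNormalPDF c) := by rw [key c]
    _ = (zstar - m) * stdNormalCDF c + σ * stdNormalPDF c := by
        rw [hc]; field_simp
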